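/- (Claw lemma) Let G be a connected bipartite Paintbucket position containing a distinguished white vertex v to which k black leaves are attached (each leaf's only neighbor is v). Let m be the total number of white vertices of G. If m ≤ k then Black has a winning strategy moving first, and if m < k then Black has a winning strategy regardless of who moves first. -/

import Mathlib

/-- A Paintbucket position: a colored graph on vertex type `V`, with a finite
set of live vertices, a coloring (`true` = black), and a boolean adjacency. -/
structure PB (V : Type) where
  verts : Finset V
  black : V → Bool
  adj : V → V → Bool

namespace PB

variable {V : Type} [DecidableEq V]

/-- The neighbors of `v` among the live vertices. -/
def nbrs (P : PB V) (v : V) : Finset V :=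
  P.verts.filter fun w => P.adj v w = true

/-- The move of player `p` (`true` = Black) at vertex `v`: delete the
neighbors of `v`, recolor `v` with the mover's color, and connect `v` to all
former neighbors of the deleted vertices. -/
def move (p : Bool) (P : PB V) (v : V) : PB V :=
  let del := P.nbrs v
  let vs := insert v (P.verts \ del)
  { verts := vs
    black := fun x => if x = v then p else P.black x
    adj := fun x y =>
      decide (x ∈ vs) && decide (y ∈ vs) && decide (x ≠ y) &&
        (if x = v then P.adj v y || decide (∃ w ∈ del, P.adj w y = true)
         else if y = v then P.adj v x || decide (∃ w ∈ del, P.adj w x = true)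
         else P.adj x y) }

/-- Player `p` may move at `v` iff the game is not over (at least two vertices
remain), `v` is live, and `v` has the opponent's color. -/
def legal (p : Bool) (P : PB V) (v : V) : Prop :=
  1 < P.verts.card ∧ v ∈ P.verts ∧ P.black v = !p

instance (p : Bool) (P : PB V) (v : V) : Decidable (legal p P v) := by
  unfold legal; infer_instance

/-- `blackWinsAux n p P`: with fuel `n` and player `p` to move, Black wins
with optimal play. When the game is over, Black wins iff the remaining vertex
is black. -/
def blackWinsAux : ℕ → Bool → PB V → Prop
  | 0, _, P => ∃ v ∈ P.verts, P.black v = true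
  | n + 1, p, P =>
    if P.verts.card ≤ 1 then ∃ v ∈ P.verts, P.black v = true
    else if p then ∃ v, legal true P v ∧ blackWinsAux n false (move true P v)
    else ∀ v, legal false P v → blackWinsAux n true (move false P v)

/-- Black wins with `p` to move (fuel `P.verts.card` suffices since every move
in a connected position removes at least one vertex). -/
def blackWins (p : Bool) (P : PB V) : Prop :=
  blackWinsAux P.verts.card p P

/-- The coloring is proper: edges join vertices of different colors. -/
def Bipartite (P : PB V) : Prop :=
  ∀ x y, P.adj x y = true → P.black x ≠ P.black y

/-- Any two live vertices are joined by a path. -/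
def Connected (P : PB V) : Prop :=
  ∀ x ∈ P.verts, ∀ y ∈ P.verts,
    Relation.ReflTransGen (fun a b => P.adj a b = true) x y

/-- A valid Paintbucket position: symmetric irreflexive adjacency supported on
the live vertices, properly two-colored, and connected. -/
def Valid (P : PB V) : Prop :=
  (∀ x y, P.adj x y = P.adj y x) ∧
  (∀ x, P.adj x x = false) ∧
  (∀ x y, P.adj x y = true → x ∈ P.verts ∧ y ∈ P.verts) ∧
  P.Bipartite ∧ P.Connected

/-- Isomorphism of colored positions. -/
def Isom {W : Type} (P : PB V) (Q : PB W) : Prop :=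
  ∃ f : V → W, Set.BijOn f ↑P.verts ↑Q.verts ∧
    (∀ x ∈ P.verts, Q.black (f x) = P.black x) ∧
    ∀ x ∈ P.verts, ∀ y ∈ P.verts, Q.adj (f x) (f y) = P.adj x y

/-- Play out a list of (player, vertex) moves. -/
def run (P : PB V) : List (Bool × V) → PB V
  | [] => P
  | m :: ms => run (move m.1 P m.2) ms

/-- All moves in the list are legal when played in order. -/
def legalRun (P : PB V) : List (Bool × V) → Prop
  | [] => True
  | m :: ms => legal m.1 P m.2 ∧ legalRun (move m.1 P m.2) ms

set_option linter.unusedSectionVars false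

variable {V : Type} [DecidableEq V]

lemma mem_nbrs {P : PB V} {v w : V} : w ∈ P.nbrs v ↔ w ∈ P.verts ∧ P.adj v w = true := by
  simp [nbrs]

lemma move_black (p : Bool) (P : PB V) (w x : V) :
    (move p P w).black x = if x = w then p else P.black x := rfl

lemma move_verts (P : PB V) (p : Bool) {w : V} (hw : w ∈ P.verts)
    (hirr : P.adj w w = false) :
    (move p P w).verts = P.verts \ P.nbrs w := by
  have : w ∈ P.verts \ P.nbrs w := by
    simp [Finset.mem_sdiff, mem_nbrs, hw, hirr]
  simpa [move] using Finset.insert_eq_self.mpr this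

lemma move_adj_iff (p : Bool) (P : PB V) (w x y : V) :
    (move p P w).adj x y = true ↔
    (x ∈ (move p P w).verts ∧ y ∈ (move p P w).verts ∧ x ≠ y ∧
      (if x = w then (P.adj w y = true ∨ ∃ u ∈ P.nbrs w, P.adj u y = true)
       else if y = w then (P.adj w x = true ∨ ∃ u ∈ P.nbrs w, P.adj u x = true)
       else P.adj x y = true)) := by
  show (_ && _ && _ && _) = true ↔ _
  rw [Bool.and_eq_true, Bool.and_eq_true, Bool.and_eq_true]
  simp only [decide_eq_true_eq]
  constructor
  · rintro ⟨⟨⟨h1, h2⟩, h3⟩, h4⟩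
    refine ⟨h1, h2, h3, ?_⟩
    split_ifs at h4 ⊢ <;> simp_all
  · rintro ⟨h1, h2, h3, h4⟩
    refine ⟨⟨⟨h1, h2⟩, h3⟩, ?_⟩
    split_ifs at h4 ⊢ <;> simp_all
lemma nbrs_nonempty {P : PB V} (hP : P.Valid) {w : V} (hw : w ∈ P.verts)
    (hcard : 2 ≤ P.verts.card) : (P.nbrs w).Nonempty := by
  obtain ⟨hsymm, hirr, hsupp, hbip, hconn⟩ := hP
  obtain ⟨y, hy, hyw⟩ : ∃ y ∈ P.verts, y ≠ w := by
    by_contra h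
    push_neg at h
    have : P.verts ⊆ {w} := fun z hz => by simp [h z hz]
    have := Finset.card_le_card this
    simp at this; omega
  have hrt := hconn w hw y hy
  rcases hrt.cases_head with h | ⟨c, hc, _⟩
  · exact absurd h.symm hyw
  · exact ⟨c, mem_nbrs.mpr ⟨(hsupp _ _ hc).2, hc⟩⟩

lemma move_card {P : PB V} (hP : P.Valid) (p : Bool) {w : V} (hw : w ∈ P.verts) :
    (move p P w).verts.card = P.verts.card - (P.nbrs w).card := by
  rw [move_verts P p hw (hP.2.1 w)]
  exact Finset.card_sdiff_of_subset (Finset.filter_subset _ _)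

lemma move_card_lt {P : PB V} (hP : P.Valid) (p : Bool) {w : V} (hw : w ∈ P.verts)
    (hcard : 2 ≤ P.verts.card) : (move p P w).verts.card < P.verts.card := by
  rw [move_card hP p hw]
  have h1 := nbrs_nonempty hP hw hcard
  have h2 : (P.nbrs w).card ≤ P.verts.card := Finset.card_le_card (Finset.filter_subset _ _)
  have := Finset.card_pos.mpr h1
  omega

lemma move_valid {P : PB V} (hP : P.Valid) {p : Bool} {w : V} (hw : w ∈ P.verts)
    (hwc : P.black w = !p) : (move p P w).Valid := by
  obtain ⟨hsymm, hirr, hsupp, hbip, hconn⟩ := hP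
  have hPv : P.Valid := ⟨hsymm, hirr, hsupp, hbip, hconn⟩
  set Q := move p P w with hQ
  have hQv : Q.verts = P.verts \ P.nbrs w := move_verts P p hw (hirr w)
  have hwQ : w ∈ Q.verts := by
    rw [hQv]; simp [mem_nbrs, hw, hirr w]
  -- colors of deleted vertices
  have hdel : ∀ u ∈ P.nbrs w, P.black u = p := by
    intro u hu
    have := hbip w u (mem_nbrs.mp hu).2
    rw [hwc] at this
    cases hb : P.black u <;> cases p <;> simp_all
  have hQsymm : ∀ x y, Q.adj x y = Q.adj y x := by
    have key : ∀ a b : V, Q.adj a b = true → Q.adj b a = true := by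
      intro a b h
      rw [move_adj_iff] at h ⊢
      obtain ⟨h1, h2, h3, h4⟩ := h
      refine ⟨h2, h1, Ne.symm h3, ?_⟩
      by_cases haw : a = w
      · have hbw : b ≠ w := fun hb => h3 (haw.trans hb.symm)
        rw [if_pos haw] at h4
        rw [if_neg hbw, if_pos haw]
        exact h4
      · by_cases hbw : b = w
        · rw [if_neg haw, if_pos hbw] at h4
          rw [if_pos hbw]
          exact h4
        · rw [if_neg haw, if_neg hbw] at h4
          rw [if_neg hbw, if_neg haw, hsymm b a]
          exact h4
    intro x y
    cases h : Q.adj x y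
    · cases h' : Q.adj y x
      · rfl
      · have := key y x h'
        rw [h] at this
        exact absurd this (by simp)
    · exact (key x y h).symm
  have hQirr : ∀ x, Q.adj x x = false := by
    intro x
    cases h : Q.adj x x
    · rfl
    · rw [move_adj_iff] at h; exact absurd rfl h.2.2.1
  have hQsupp : ∀ x y, Q.adj x y = true → x ∈ Q.verts ∧ y ∈ Q.verts := by
    intro x y h
    rw [move_adj_iff] at h
    exact ⟨h.1, h.2.1⟩
  have hQbip : Q.Bipartite := by
    intro x y h
    rw [move_adj_iff] at h
    obtain ⟨h1, h2, h3, h4⟩ := h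
    have hmem : ∀ z, z ∈ Q.verts → z ≠ w → z ∈ P.verts ∧ z ∉ P.nbrs w := by
      intro z hz _; rw [hQv] at hz; exact Finset.mem_sdiff.mp hz
    have key : ∀ z, z ∈ Q.verts → z ≠ w →
        (P.adj w z = true ∨ ∃ u ∈ P.nbrs w, P.adj u z = true) → Q.black w ≠ Q.black z := by
      intro z hz hzw hadj
      obtain ⟨hzP, hznb⟩ := hmem z hz hzw
      have hzc : P.black z = !p := by
        rcases hadj with h | ⟨u, hu, hadj⟩
        · exact absurd (mem_nbrs.mpr ⟨hzP, h⟩) hznb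
        · have := hbip u z hadj
          rw [hdel u hu] at this
          cases hb : P.black z <;> cases p <;> simp_all
      rw [hQ]
      simp [move_black, hzw, hzc]
    split_ifs at h4 with hxw hyw
    · subst hxw; exact key y h2 (Ne.symm h3) h4
    · subst hyw; exact (key x h1 h3 h4).symm
    · have : Q.black x = P.black x := by simp [hQ, move_black, hxw]
      have h2' : Q.black y = P.black y := by simp [hQ, move_black, hyw]
      rw [this, h2']
      exact hbip x y h4
  have hQconn : Q.Connected := by
    have reach : ∀ x, Relation.ReflTransGen (fun a b => P.adj a b = true) w x →
        x ∈ Q.verts → Relation.ReflTransGen (fun a b => Q.adj a b = true) w x := by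
      intro x h
      induction h with
      | refl => intro _; exact .refl
      | @tail b c hwb hbc ih =>
        intro hcQ
        by_cases hcw : c = w
        · subst hcw; exact .refl
        have hcP : c ∈ P.verts := (hsupp _ _ hbc).2
        have hbP : b ∈ P.verts := (hsupp _ _ hbc).1
        have hbc' : b ≠ c := by rintro rfl; rw [hirr b] at hbc; simp at hbc
        have hcnb : c ∉ P.nbrs w := by rw [hQv] at hcQ; exact (Finset.mem_sdiff.mp hcQ).2
        by_cases hbd : b ∈ P.nbrs w
        · -- direct edge from w to c
          refine Relation.ReflTransGen.single ?_
          rw [move_adj_iff]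
          refine ⟨hwQ, hcQ, Ne.symm hcw, ?_⟩
          simp only [if_pos rfl]
          exact Or.inr ⟨b, hbd, hbc⟩
        · have hbw : b ≠ w := by
            rintro rfl
            exact hcnb (mem_nbrs.mpr ⟨hcP, hbc⟩)
          have hbQ : b ∈ Q.verts := by rw [hQv]; exact Finset.mem_sdiff.mpr ⟨hbP, hbd⟩
          refine (ih hbQ).tail ?_
          rw [move_adj_iff]
          refine ⟨hbQ, hcQ, hbc', ?_⟩
          rw [if_neg hbw, if_neg hcw]
          exact hbc
    intro x hx y hy
    have hxw := reach x (hconn w hw x (by rw [hQv] at hx; exact (Finset.mem_sdiff.mp hx).1)) hx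
    have hyw := reach y (hconn w hw y (by rw [hQv] at hy; exact (Finset.mem_sdiff.mp hy).1)) hy
    have hsym : Symmetric (fun a b => Q.adj a b = true) := by
      intro a b h; rw [hQsymm b a]; exact h
    exact ((@Relation.ReflTransGen.symmetric _ _ ⟨hsym⟩).symm _ _ hxw).trans hyw
  exact ⟨hQsymm, hQirr, hQsupp, hQbip, hQconn⟩
lemma nbrs_color {P : PB V} (hP : P.Valid) {w : V} :
    ∀ u ∈ P.nbrs w, P.black u = !P.black w := by
  intro u hu
  have := hP.2.2.2.1 w u (mem_nbrs.mp hu).2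
  cases h : P.black u <;> cases h' : P.black w <;> simp_all

lemma white_filter_black_move {P : PB V} (hP : P.Valid) {w : V} (hw : w ∈ P.verts)
    (hww : P.black w = false) :
    ((move true P w).verts.filter fun x => (move true P w).black x = false) =
      (P.verts.filter fun x => P.black x = false).erase w := by
  ext x
  simp only [Finset.mem_filter, Finset.mem_erase, move_verts P true hw (hP.2.1 w),
    Finset.mem_sdiff, move_black]
  by_cases hxw : x = w
  · simp [hxw]
  · simp only [if_neg hxw]
    constructor
    · rintro ⟨⟨h1, _⟩, h2⟩
      exact ⟨hxw, h1, h2⟩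
    · rintro ⟨_, h1, h2⟩
      refine ⟨⟨h1, fun hn => ?_⟩, h2⟩
      have := nbrs_color hP x hn
      rw [hww, h2] at this
      simp at this

lemma white_filter_white_move {P : PB V} (hP : P.Valid) {w : V} (hw : w ∈ P.verts)
    (hwb : P.black w = true) :
    ((move false P w).verts.filter fun x => (move false P w).black x = false) =
      insert w ((P.verts.filter fun x => P.black x = false) \ P.nbrs w) := by
  ext x
  simp only [Finset.mem_filter, Finset.mem_insert, move_verts P false hw (hP.2.1 w),
    Finset.mem_sdiff, move_black]
  by_cases hxw : x = w
  · simp [hxw, hw, mem_nbrs, hP.2.1 w]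
  · simp only [if_neg hxw, hxw, false_or]
    tauto

lemma white_card_white_move {P : PB V} (hP : P.Valid) {w : V} (hw : w ∈ P.verts)
    (hwb : P.black w = true) (hcard : 2 ≤ P.verts.card) :
    ((move false P w).verts.filter fun x => (move false P w).black x = false).card ≤
      (P.verts.filter fun x => P.black x = false).card := by
  rw [white_filter_white_move hP hw hwb]
  have hsub : P.nbrs w ⊆ P.verts.filter fun x => P.black x = false := by
    intro u hu
    have := nbrs_color hP u hu
    rw [hwb] at this
    exact Finset.mem_filter.mpr ⟨(mem_nbrs.mp hu).1, by simpa using this⟩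
  have hne := nbrs_nonempty hP hw hcard
  have h1 : ((P.verts.filter fun x => P.black x = false) \ P.nbrs w).card =
      (P.verts.filter fun x => P.black x = false).card - (P.nbrs w).card :=
    Finset.card_sdiff_of_subset hsub
  have h2 : 1 ≤ (P.nbrs w).card := Finset.card_pos.mpr hne
  have h3 : (P.nbrs w).card ≤ (P.verts.filter fun x => P.black x = false).card :=
    Finset.card_le_card hsub
  calc (insert w ((P.verts.filter fun x => P.black x = false) \ P.nbrs w)).card
      ≤ ((P.verts.filter fun x => P.black x = false) \ P.nbrs w).card + 1 :=
        Finset.card_insert_le _ _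
    _ ≤ _ := by omega
structure ClawPos (P : PB V) (v : V) (L : Finset V) : Prop where
  valid : P.Valid
  hv : v ∈ P.verts
  hvw : P.black v = false
  hLs : L ⊆ P.verts
  hLb : ∀ l ∈ L, P.black l = true
  hLl : ∀ l ∈ L, P.nbrs l = {v}

namespace ClawPos

variable {P : PB V} {v : V} {L : Finset V}

lemma leaf_ne (hC : ClawPos P v L) {l : V} (hl : l ∈ L) : l ≠ v := by
  intro h
  have := hC.hLb l hl
  rw [h, hC.hvw] at this
  simp at this

lemma leaf_adj (hC : ClawPos P v L) {l : V} (hl : l ∈ L) : P.adj l v = true := by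
  have : v ∈ P.nbrs l := by rw [hC.hLl l hl]; simp
  exact (mem_nbrs.mp this).2

lemma leaf_adj_only (hC : ClawPos P v L) {l : V} (hl : l ∈ L) {y : V} (hy : P.adj l y = true) : y = v := by
  have : y ∈ P.nbrs l := mem_nbrs.mpr ⟨(hC.valid.2.2.1 l y hy).2, hy⟩
  rw [hC.hLl l hl] at this
  simpa using this

lemma two_le_card (hC : ClawPos P v L) (hL : 1 ≤ L.card) : 2 ≤ P.verts.card := by
  obtain ⟨l, hl⟩ := Finset.card_pos.mp hL
  exact Finset.one_lt_card.mpr ⟨l, hC.hLs hl, v, hC.hv, hC.leaf_ne hl⟩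

/-- The claw survives a Black move at a white vertex `w ≠ v`. -/
lemma black_move (hC : ClawPos P v L) {w : V} (hw : w ∈ P.verts) (hww : P.black w = false)
    (hwv : w ≠ v) : ClawPos (move true P w) v L := by
  obtain ⟨hsymm, hirr, hsupp, hbip, hconn⟩ := hC.valid
  have hQv : (move true P w).verts = P.verts \ P.nbrs w :=
    move_verts P true hw (hirr w)
  have hdelb : ∀ u ∈ P.nbrs w, P.black u = true := by
    intro u hu; rw [nbrs_color hC.valid u hu, hww]; rfl
  have hvQ : v ∈ (move true P w).verts := by
    rw [hQv, Finset.mem_sdiff]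
    refine ⟨hC.hv, fun hn => ?_⟩
    have h2 := hdelb v hn
    rw [hC.hvw] at h2
    simp at h2
  have hLQ : ∀ l ∈ L, l ∈ (move true P w).verts := by
    intro l hl
    rw [hQv, Finset.mem_sdiff]
    refine ⟨hC.hLs hl, fun hn => ?_⟩
    have hadj : P.adj l w = true := by rw [hsymm l w]; exact (mem_nbrs.mp hn).2
    exact hwv (hC.leaf_adj_only hl hadj)
  have hLw : ∀ l ∈ L, l ≠ w := by
    intro l hl h
    have h2 := hC.hLb l hl
    rw [h, hww] at h2
    simp at h2
  refine ⟨move_valid hC.valid hw (by simp [hww]), hvQ, ?_, hLQ, ?_, ?_⟩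
  · rw [move_black, if_neg (Ne.symm hwv)]; exact hC.hvw
  · intro l hl
    rw [move_black, if_neg (hLw l hl)]
    exact hC.hLb l hl
  · intro l hl
    ext y
    rw [mem_nbrs, Finset.mem_singleton]
    constructor
    · rintro ⟨hyQ, hadj⟩
      rw [move_adj_iff, if_neg (hLw l hl)] at hadj
      obtain ⟨_, _, hly, hif⟩ := hadj
      by_cases hyw : y = w
      · exfalso
        rw [if_pos hyw] at hif
        rcases hif with h | ⟨u, hu, hadj⟩
        · have : P.adj l w = true := by rw [hsymm l w]; exact h
          exact hwv (hC.leaf_adj_only hl this)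
        · have : P.adj l u = true := by rw [hsymm l u]; exact hadj
          have huv := hC.leaf_adj_only hl this
          rw [huv] at hu
          have h2 := hdelb v hu
          rw [hC.hvw] at h2
          simp at h2
      · rw [if_neg hyw] at hif
        exact hC.leaf_adj_only hl hif
    · rintro rfl
      refine ⟨hvQ, ?_⟩
      rw [move_adj_iff, if_neg (hLw l hl), if_neg (Ne.symm hwv)]
      exact ⟨hLQ l hl, hvQ, hC.leaf_ne hl, hC.leaf_adj hl⟩

/-- The claw (with center possibly moving) survives a White move at a black
vertex `b`. -/
lemma white_move (hC : ClawPos P v L) {b : V} (hb : b ∈ P.verts) (hbb : P.black b = true) :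
    ClawPos (move false P b) (if v ∈ P.nbrs b then b else v) (L.erase b) := by
  obtain ⟨hsymm, hirr, hsupp, hbip, hconn⟩ := hC.valid
  have hQv : (move false P b).verts = P.verts \ P.nbrs b :=
    move_verts P false hb (hirr b)
  have hdelw : ∀ u ∈ P.nbrs b, P.black u = false := by
    intro u hu; rw [nbrs_color hC.valid u hu, hbb]; rfl
  have hvb : v ≠ b := by
    intro h
    have h2 := hC.hvw
    rw [h, hbb] at h2
    simp at h2
  have hbQ : b ∈ (move true P b).verts := by
    rw [move_verts P true hb (hirr b), Finset.mem_sdiff]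
    exact ⟨hb, fun hn => by rw [mem_nbrs] at hn; rw [hirr b] at hn; simp at hn⟩
  have hbQ' : b ∈ (move false P b).verts := by
    rw [hQv, Finset.mem_sdiff]
    exact ⟨hb, fun hn => by rw [mem_nbrs] at hn; rw [hirr b] at hn; simp at hn⟩
  have hLQ : ∀ l ∈ L.erase b, l ∈ (move false P b).verts := by
    intro l hl
    rw [hQv, Finset.mem_sdiff]
    refine ⟨hC.hLs (Finset.mem_of_mem_erase hl), fun hn => ?_⟩
    have := hdelw l hn
    rw [hC.hLb l (Finset.mem_of_mem_erase hl)] at this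
    simp at this
  have hLb' : ∀ l ∈ L.erase b, l ≠ b := fun l hl => Finset.ne_of_mem_erase hl
  refine ⟨move_valid hC.valid hb (by simp [hbb]), ?_, ?_, hLQ, ?_, ?_⟩
  · split_ifs with hvnb
    · exact hbQ'
    · rw [hQv, Finset.mem_sdiff]; exact ⟨hC.hv, hvnb⟩
  · split_ifs with hvnb
    · rw [move_black, if_pos rfl]
    · rw [move_black, if_neg hvb]; exact hC.hvw
  · intro l hl
    rw [move_black, if_neg (hLb' l hl)]
    exact hC.hLb l (Finset.mem_of_mem_erase hl)
  · intro l hl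
    have hlL := Finset.mem_of_mem_erase hl
    have hlb := hLb' l hl
    ext y
    rw [mem_nbrs, Finset.mem_singleton]
    split_ifs with hvnb
    · -- v is deleted; new center is b
      constructor
      · rintro ⟨hyQ, hadj⟩
        rw [move_adj_iff, if_neg hlb] at hadj
        obtain ⟨_, _, hly, hif⟩ := hadj
        by_cases hyb : y = b
        · exact hyb
        · exfalso
          rw [if_neg hyb] at hif
          have := hC.leaf_adj_only hlL hif
          rw [this] at hyQ
          rw [hQv, Finset.mem_sdiff] at hyQ
          exact hyQ.2 hvnb
      · rintro rfl
        refine ⟨hbQ', ?_⟩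
        rw [move_adj_iff, if_neg hlb, if_pos rfl]
        refine ⟨hLQ l hl, hbQ', hlb, Or.inr ⟨v, hvnb, ?_⟩⟩
        rw [hsymm v l]
        exact hC.leaf_adj hlL
    · -- v survives; center stays v
      constructor
      · rintro ⟨hyQ, hadj⟩
        rw [move_adj_iff, if_neg hlb] at hadj
        obtain ⟨_, _, hly, hif⟩ := hadj
        by_cases hyb : y = b
        · exfalso
          rw [if_pos hyb] at hif
          rcases hif with h | ⟨u, hu, hadj⟩
          · have : P.adj l b = true := by rw [hsymm l b]; exact h
            exact hvb (hC.leaf_adj_only hlL this).symm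
          · have : P.adj l u = true := by rw [hsymm l u]; exact hadj
            have := hC.leaf_adj_only hlL this
            rw [this] at hu
            exact hvnb hu
        · rw [if_neg hyb] at hif
          exact hC.leaf_adj_only hlL hif
      · rintro rfl
        refine ⟨by rw [hQv, Finset.mem_sdiff]; exact ⟨hC.hv, hvnb⟩, ?_⟩
        rw [move_adj_iff, if_neg hlb, if_neg hvb]
        exact ⟨hLQ l hl, by rw [hQv, Finset.mem_sdiff]; exact ⟨hC.hv, hvnb⟩,
          hC.leaf_ne hlL, hC.leaf_adj hlL⟩

end ClawPos
lemma blackWinsAux_small {P : PB V} (h : P.verts.card ≤ 1)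
    (hx : ∃ x ∈ P.verts, P.black x = true) : ∀ n p, blackWinsAux n p P := by
  intro n p
  cases n with
  | zero => exact hx
  | succ n =>
    show (if P.verts.card ≤ 1 then _ else _ : Prop)
    rw [if_pos h]
    exact hx

lemma blackWinsAux_succ_true {P : PB V} {n : ℕ} (h : ¬ P.verts.card ≤ 1)
    (hx : ∃ w, legal true P w ∧ blackWinsAux n false (move true P w)) :
    blackWinsAux (n + 1) true P := by
  show (if P.verts.card ≤ 1 then _ else _ : Prop)
  rw [if_neg h]
  simpa using hx

lemma blackWinsAux_succ_false {P : PB V} {n : ℕ} (h : ¬ P.verts.card ≤ 1)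
    (hx : ∀ b, legal false P b → blackWinsAux n true (move false P b)) :
    blackWinsAux (n + 1) false P := by
  show (if P.verts.card ≤ 1 then _ else _ : Prop)
  rw [if_neg h]
  simpa using hx

theorem claw_main (n : ℕ) : ∀ (P : PB V) (v : V) (L : Finset V), ClawPos P v L →
    P.verts.card ≤ n + 1 →
    (((P.verts.filter fun x => P.black x = false).card ≤ L.card →
        blackWinsAux n true P) ∧
     ((P.verts.filter fun x => P.black x = false).card < L.card →
        blackWinsAux n false P)) := by
  induction n with
  | zero =>
    intro P v L hC hcard
    have hvf : v ∈ P.verts.filter fun x => P.black x = false :=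
      Finset.mem_filter.mpr ⟨hC.hv, hC.hvw⟩
    have hm : 1 ≤ (P.verts.filter fun x => P.black x = false).card :=
      Finset.card_pos.mpr ⟨v, hvf⟩
    constructor <;> intro hmk
    · have h2 := hC.two_le_card (by omega)
      omega
    · have h2 := hC.two_le_card (by omega)
      omega
  | succ n ih =>
    intro P v L hC hcard
    have hvf : v ∈ P.verts.filter fun x => P.black x = false :=
      Finset.mem_filter.mpr ⟨hC.hv, hC.hvw⟩
    have hm : 1 ≤ (P.verts.filter fun x => P.black x = false).card :=
      Finset.card_pos.mpr ⟨v, hvf⟩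
    constructor <;> intro hmk
    -- Black to move, m ≤ k
    · have hk1 : 1 ≤ L.card := by omega
      have h2 := hC.two_le_card hk1
      apply blackWinsAux_succ_true (by omega)
      by_cases hm1 : (P.verts.filter fun x => P.black x = false).card ≤ 1
      · -- star: all other vertices are black leaves; Black moves at v and wins
        refine ⟨v, ⟨by omega, hC.hv, by simp [hC.hvw]⟩, ?_⟩
        have hfil : (P.verts.filter fun x => P.black x = false) = {v} := by
          apply Finset.eq_singleton_iff_unique_mem.mpr
          refine ⟨hvf, fun x hx => ?_⟩
          by_contra hne
          have : 2 ≤ (P.verts.filter fun x => P.black x = false).card :=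
            Finset.one_lt_card.mpr ⟨x, hx, v, hvf, hne⟩
          omega
        obtain ⟨hsymm, hirr, hsupp, hbip, hconn⟩ := hC.valid
        have hall : ∀ x ∈ P.verts, x ≠ v → P.adj v x = true := by
          intro x hx hxv
          rcases (hconn x hx v hC.hv).cases_head with h | ⟨c, hc, _⟩
          · exact absurd h hxv
          · have hcv : c = v := by
              have hcm : c ∈ P.verts.filter fun z => P.black z = false := by
                refine Finset.mem_filter.mpr ⟨(hsupp _ _ hc).2, ?_⟩
                have hxb : P.black x = true := by
                  by_contra hxb
                  have : x ∈ P.verts.filter fun z => P.black z = false :=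
                    Finset.mem_filter.mpr ⟨hx, by simpa using hxb⟩
                  rw [hfil] at this
                  exact hxv (by simpa using this)
                have := hbip x c hc
                rw [hxb] at this
                cases hb : P.black c
                · rfl
                · rw [hb] at this; simp at this
              rw [hfil] at hcm
              simpa using hcm
            rw [hsymm v x, ← hcv]
            exact hc
        have hnv : P.nbrs v = P.verts.erase v := by
          ext u
          rw [mem_nbrs, Finset.mem_erase]
          constructor
          · rintro ⟨hu, hadj⟩
            refine ⟨fun h => ?_, hu⟩
            rw [h, hirr v] at hadj
            simp at hadj
          · rintro ⟨huv, hu⟩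
            exact ⟨hu, hall u hu huv⟩
        have hQv : (move true P v).verts = {v} := by
          rw [move_verts P true hC.hv (hirr v), hnv]
          ext x
          simp only [Finset.mem_sdiff, Finset.mem_erase, Finset.mem_singleton]
          constructor
          · rintro ⟨hx, hx2⟩
            by_contra hne
            exact hx2 ⟨hne, hx⟩
          · rintro rfl
            exact ⟨hC.hv, fun h => h.1 rfl⟩
        apply blackWinsAux_small
        · rw [hQv]; simp
        · exact ⟨v, by rw [hQv]; simp, by rw [move_black, if_pos rfl]⟩
      · -- pick a white vertex other than v and move there
        have : 1 ≤ ((P.verts.filter fun x => P.black x = false).erase v).card := by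
          rw [Finset.card_erase_of_mem hvf]
          omega
        obtain ⟨w, hw⟩ := Finset.card_pos.mp this
        have hwv : w ≠ v := Finset.ne_of_mem_erase hw
        have hwf := Finset.mem_of_mem_erase hw
        have hwP : w ∈ P.verts := (Finset.mem_filter.mp hwf).1
        have hwc : P.black w = false := (Finset.mem_filter.mp hwf).2
        refine ⟨w, ⟨by omega, hwP, by simp [hwc]⟩, ?_⟩
        have hCQ := hC.black_move hwP hwc hwv
        have hcardQ : (move true P w).verts.card ≤ n + 1 := by
          have := move_card_lt hC.valid true hwP h2
          omega
        apply (ih (move true P w) v L hCQ hcardQ).2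
        rw [white_filter_black_move hC.valid hwP hwc, Finset.card_erase_of_mem hwf]
        omega
    -- White to move, m < k
    · have hk1 : 1 ≤ L.card := by omega
      have h2 := hC.two_le_card hk1
      apply blackWinsAux_succ_false (by omega)
      rintro b ⟨-, hbP, hbb⟩
      rw [Bool.not_false] at hbb
      have hCQ := hC.white_move hbP hbb
      have hcardQ : (move false P b).verts.card ≤ n + 1 := by
        have := move_card_lt hC.valid false hbP h2
        omega
      apply (ih (move false P b) _ _ hCQ hcardQ).1
      have hle := white_card_white_move hC.valid hbP hbb h2
      have herase : L.card - 1 ≤ (L.erase b).card := by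
        by_cases hbL : b ∈ L
        · rw [Finset.card_erase_of_mem hbL]
        · rw [Finset.erase_eq_of_notMem hbL]
          omega
      omega
end PB

open PB in
/-- claw lemma: if a valid position has a white vertex `v` with
`k` black leaves attached (each leaf `l ∈ L` has `v` as its only neighbor) and
`m` white vertices in total, then: if `m ≤ k`, Black wins moving first, and if
`m < k`, Black wins no matter who moves first. -/
theorem paintbucket_claw_lemma
    {V : Type} [DecidableEq V] (P : PB V) (hP : P.Valid)
    (v : V) (hv : v ∈ P.verts) (hvwhite : P.black v = false)
    (L : Finset V) (hLsub : L ⊆ P.verts)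
    (hLblack : ∀ l ∈ L, P.black l = true)
    (hLleaf : ∀ l ∈ L, P.nbrs l = {v}) :
    ((P.verts.filter fun x => P.black x = false).card ≤ L.card →
      blackWins true P) ∧
    ((P.verts.filter fun x => P.black x = false).card < L.card →
      blackWins true P ∧ blackWins false P) := by
  have hC : P.ClawPos v L := ⟨hP, hv, hvwhite, hLsub, hLblack, hLleaf⟩
  have h := PB.claw_main P.verts.card P v L hC (by omega)
  exact ⟨h.1, fun hlt => ⟨h.1 (le_of_lt hlt), h.2 hlt⟩⟩
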